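/- Stability part of Theorem 2. Let P₁ (n₁×n̂₁), P₁† (n̂₁×n₁), P̄₁ (n₁×(n₁−n̂₁)), P̄₁† ((n₁−n̂₁)×n₁) be real matrices with P₁†P₁ = I, P₁P₁† + P̄₁P̄₁† = I, P₁P₁†B₁ = B₁, and P₁†L₁ = 0. Suppose the block matrix A = [[A₁, L₁Γ₂],[L₂Γ₁, A₂]] is Hurwitz, and let K̂₁ be any real m₁×n̂₁ matrix such that P₁†A₁P₁ + P₁†B₁K̂₁ is Hurwitz. Then the (n₁+n₂+n̂₁)×(n₁+n₂+n̂₁) closed-loop matrix of the preexisting system with the retrofit controller Π₁' (consisting of the localizing compensator x̂₁' = P₁†A₁P₁x̂₁ + P₁†A₁P̄₁P̄₁†x₁ and the feedback u₁ = K̂₁(P₁†x₁ − x̂₁)), namely the block matrix (with state ordering (x₁, x₂, x̂₁)) M_cl' = [[A₁ + B₁K̂₁P₁†, L₁Γ₂, −B₁K̂₁],[L₂Γ₁, A₂, 0],[P₁†A₁P̄₁P̄₁†, 0, P₁†A₁P₁]], is Hurwitz. -/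

import Mathlib

open Matrix

/-- A real square matrix is Hurwitz if every complex eigenvalue has negative real part. -/
def IsHurwitz {n : Type*} [Fintype n] [DecidableEq n] (M : Matrix n n ℝ) : Prop :=
  ∀ μ ∈ spectrum ℂ (M.map (Complex.ofReal)), μ.re < 0

open Polynomial in
/-- Over `ℂ`, membership in the spectrum of a matrix is equivalent to being a root of the
characteristic polynomial. -/
lemma mem_spectrum_iff_isRoot_charpoly' {n : Type*} [Fintype n] [DecidableEq n]
    (M : Matrix n n ℂ) (μ : ℂ) :
    μ ∈ spectrum ℂ M ↔ M.charpoly.IsRoot μ := by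
  have hdet : (algebraMap ℂ (Matrix n n ℂ) μ - M).det = M.charpoly.eval μ := by
    rw [Matrix.charpoly, ← Polynomial.coe_evalRingHom, RingHom.map_det]
    congr 1
    ext i j
    simp [charmatrix_apply, Matrix.algebraMap_matrix_apply, diagonal_apply, Matrix.sub_apply,
      apply_ite (eval μ)]
  rw [spectrum.mem_iff, Matrix.isUnit_iff_isUnit_det, hdet, isUnit_iff_ne_zero, not_ne_iff,
    Polynomial.IsRoot]

lemma fromRows_add' {R m₁ m₂ n : Type*} [AddCommMonoid R] (A : Matrix m₁ n R) (B : Matrix m₂ n R)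
    (C : Matrix m₁ n R) (D : Matrix m₂ n R) :
    fromRows A B + fromRows C D = fromRows (A + C) (B + D) := by
  ext (i | i) j <;> simp [fromRows_apply_inl, fromRows_apply_inr]

/-- The coordinate-change matrix squares to the identity. -/
lemma aux_TT {n₁ n₂ nh₁ : ℕ} (P₁d : Matrix (Fin nh₁) (Fin n₁) ℝ) :
    (fromBlocks 1 0 (fromRows 0 P₁d) (fromBlocks 1 0 0 (-1)) :
        Matrix (Fin n₁ ⊕ (Fin n₂ ⊕ Fin nh₁)) (Fin n₁ ⊕ (Fin n₂ ⊕ Fin nh₁)) ℝ) *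
      fromBlocks 1 0 (fromRows 0 P₁d) (fromBlocks 1 0 0 (-1)) = 1 := by
  simp only [fromBlocks_multiply, fromBlocks_mul_fromRows, fromRows_mul,
    Matrix.mul_one, Matrix.one_mul, Matrix.zero_mul, Matrix.mul_zero,
    add_zero, zero_add, Matrix.neg_mul, Matrix.mul_neg, neg_neg, neg_zero,
    fromRows_add', fromBlocks_add, add_neg_cancel, neg_add_cancel, fromRows_zero]
  rw [fromBlocks_one, fromBlocks_one]

/-- Conjugating the closed-loop matrix by the coordinate change yields a block-triangular
matrix. -/
lemma aux_conj {n₁ n₂ nh₁ m₁ m₂ q : ℕ}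
    (A₁ : Matrix (Fin n₁) (Fin n₁) ℝ) (L₁ : Matrix (Fin n₁) (Fin m₂) ℝ)
    (B₁ : Matrix (Fin n₁) (Fin m₁) ℝ) (A₂ : Matrix (Fin n₂) (Fin n₂) ℝ)
    (L₂ : Matrix (Fin n₂) (Fin q) ℝ) (Γ₁ : Matrix (Fin q) (Fin n₁) ℝ)
    (Γ₂ : Matrix (Fin m₂) (Fin n₂) ℝ)
    (P₁ : Matrix (Fin n₁) (Fin nh₁) ℝ) (P₁d : Matrix (Fin nh₁) (Fin n₁) ℝ)
    (Pb₁ : Matrix (Fin n₁) (Fin (n₁ - nh₁)) ℝ) (Pb₁d : Matrix (Fin (n₁ - nh₁)) (Fin n₁) ℝ)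
    (Kh₁ : Matrix (Fin m₁) (Fin nh₁) ℝ)
    (hproj : P₁ * P₁d + Pb₁ * Pb₁d = 1)
    (hL : P₁d * L₁ = 0) :
    (fromBlocks (1 : Matrix (Fin n₁) (Fin n₁) ℝ) 0 (fromRows 0 P₁d)
        (fromBlocks 1 0 0 (-1)) : Matrix (Fin n₁ ⊕ (Fin n₂ ⊕ Fin nh₁)) _ ℝ) *
      (fromBlocks (A₁ + B₁ * Kh₁ * P₁d) (fromCols (L₁ * Γ₂) (-(B₁ * Kh₁)))
        (fromRows (L₂ * Γ₁) (P₁d * A₁ * Pb₁ * Pb₁d))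
        (fromBlocks A₂ (0 : Matrix (Fin n₂) (Fin nh₁) ℝ)
          (0 : Matrix (Fin nh₁) (Fin n₂) ℝ) (P₁d * A₁ * P₁)) *
       fromBlocks 1 0 (fromRows 0 P₁d) (fromBlocks 1 0 0 (-1))) =
    fromBlocks A₁ (fromCols (L₁ * Γ₂) (B₁ * Kh₁)) (fromRows (L₂ * Γ₁) 0)
      (fromBlocks A₂ 0 0 (P₁d * A₁ * P₁ + P₁d * B₁ * Kh₁)) := by
  have hPb : Pb₁ * Pb₁d = 1 - P₁ * P₁d := by rw [eq_sub_iff_add_eq, add_comm]; exact hproj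
  have hL2 : P₁d * (L₁ * Γ₂) = 0 := by rw [← Matrix.mul_assoc, hL, Matrix.zero_mul]
  simp only [Matrix.mul_assoc, hPb, fromBlocks_multiply, fromBlocks_mul_fromRows,
    fromCols_mul_fromRows, fromRows_mul_fromCols, fromCols_mul_fromBlocks,
    fromRows_mul, mul_fromCols, Matrix.mul_one, Matrix.one_mul, Matrix.zero_mul,
    Matrix.mul_zero, add_zero, zero_add, Matrix.mul_sub, Matrix.sub_mul, Matrix.mul_one, hL2,
    Matrix.neg_mul, Matrix.mul_neg, neg_neg, neg_zero, add_neg_cancel_right,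
    fromCols_fromRows_eq_fromBlocks, fromBlocks_add, fromRows_add']
  rw [fromBlocks_inj]
  exact ⟨by abel, rfl, by congr 1 <;> abel, by congr 1 <;> abel⟩

/-- **Stability part of Theorem 2.** The closed-loop matrix of the preexisting system with
the retrofit controller `Π₁'` (state ordering `(x₁, x₂, x̂₁)`) is Hurwitz. -/
theorem theorem2_closed_loop_stability
    {n₁ n₂ nh₁ m₁ m₂ q : ℕ}
    (A₁ : Matrix (Fin n₁) (Fin n₁) ℝ) (L₁ : Matrix (Fin n₁) (Fin m₂) ℝ)
    (B₁ : Matrix (Fin n₁) (Fin m₁) ℝ) (A₂ : Matrix (Fin n₂) (Fin n₂) ℝ)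
    (L₂ : Matrix (Fin n₂) (Fin q) ℝ) (Γ₁ : Matrix (Fin q) (Fin n₁) ℝ)
    (Γ₂ : Matrix (Fin m₂) (Fin n₂) ℝ)
    (P₁ : Matrix (Fin n₁) (Fin nh₁) ℝ) (P₁d : Matrix (Fin nh₁) (Fin n₁) ℝ)
    (Pb₁ : Matrix (Fin n₁) (Fin (n₁ - nh₁)) ℝ) (Pb₁d : Matrix (Fin (n₁ - nh₁)) (Fin n₁) ℝ)
    (Kh₁ : Matrix (Fin m₁) (Fin nh₁) ℝ)
    (hleft : P₁d * P₁ = 1)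
    (hproj : P₁ * P₁d + Pb₁ * Pb₁d = 1)
    (hB : P₁ * P₁d * B₁ = B₁)
    (hL : P₁d * L₁ = 0)
    (hA : IsHurwitz (fromBlocks A₁ (L₁ * Γ₂) (L₂ * Γ₁) A₂))
    (hK : IsHurwitz (P₁d * A₁ * P₁ + P₁d * B₁ * Kh₁)) :
    IsHurwitz
      (fromBlocks (A₁ + B₁ * Kh₁ * P₁d) (fromCols (L₁ * Γ₂) (-(B₁ * Kh₁)))
        (fromRows (L₂ * Γ₁) (P₁d * A₁ * Pb₁ * Pb₁d))
        (fromBlocks A₂ (0 : Matrix (Fin n₂) (Fin nh₁) ℝ)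
          (0 : Matrix (Fin nh₁) (Fin n₂) ℝ) (P₁d * A₁ * P₁))) := by
  set K : Matrix (Fin nh₁) (Fin nh₁) ℝ := P₁d * A₁ * P₁ + P₁d * B₁ * Kh₁ with hKdef
  set Ab : Matrix (Fin n₁ ⊕ Fin n₂) (Fin n₁ ⊕ Fin n₂) ℝ :=
    fromBlocks A₁ (L₁ * Γ₂) (L₂ * Γ₁) A₂ with hAbdef
  set Mcl : Matrix (Fin n₁ ⊕ (Fin n₂ ⊕ Fin nh₁)) (Fin n₁ ⊕ (Fin n₂ ⊕ Fin nh₁)) ℝ :=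
    fromBlocks (A₁ + B₁ * Kh₁ * P₁d) (fromCols (L₁ * Γ₂) (-(B₁ * Kh₁)))
        (fromRows (L₂ * Γ₁) (P₁d * A₁ * Pb₁ * Pb₁d))
        (fromBlocks A₂ (0 : Matrix (Fin n₂) (Fin nh₁) ℝ)
          (0 : Matrix (Fin nh₁) (Fin n₂) ℝ) (P₁d * A₁ * P₁)) with hMcldef
  set T : Matrix (Fin n₁ ⊕ (Fin n₂ ⊕ Fin nh₁)) (Fin n₁ ⊕ (Fin n₂ ⊕ Fin nh₁)) ℝ :=
    fromBlocks 1 0 (fromRows 0 P₁d) (fromBlocks 1 0 0 (-1)) with hTdef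
  set N : Matrix (Fin n₁ ⊕ (Fin n₂ ⊕ Fin nh₁)) (Fin n₁ ⊕ (Fin n₂ ⊕ Fin nh₁)) ℝ :=
    fromBlocks A₁ (fromCols (L₁ * Γ₂) (B₁ * Kh₁)) (fromRows (L₂ * Γ₁) 0)
      (fromBlocks A₂ 0 0 K) with hNdef
  have hT : T * T = 1 := aux_TT P₁d
  have hTMT : T * (Mcl * T) = N :=
    aux_conj A₁ L₁ B₁ A₂ L₂ Γ₁ Γ₂ P₁ P₁d Pb₁ Pb₁d Kh₁ hproj hL
  have hMcl : Mcl = T * N * T := by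
    rw [← hTMT]
    calc Mcl = T * T * Mcl * (T * T) := by rw [hT, Matrix.one_mul, Matrix.mul_one]
    _ = T * (T * (Mcl * T)) * T := by simp only [Matrix.mul_assoc]
  -- the reindexed triangular form
  set e : (Fin n₁ ⊕ (Fin n₂ ⊕ Fin nh₁)) ≃ ((Fin n₁ ⊕ Fin n₂) ⊕ Fin nh₁) :=
    (Equiv.sumAssoc (Fin n₁) (Fin n₂) (Fin nh₁)).symm with hedef
  have hre : reindex e e N = fromBlocks Ab (fromRows (B₁ * Kh₁) 0) 0 K := by
    ext (⟨i | i⟩ | i) (⟨j | j⟩ | j) <;> rfl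
  -- move to ℂ
  intro μ hμ
  set f : ℝ →+* ℂ := Complex.ofRealHom with hfdef
  have hmapT : (Mcl).map (Complex.ofReal) = (T.map f) * (N.map f) * (T.map f) := by
    show Mcl.map f = _
    rw [hMcl, Matrix.map_mul, Matrix.map_mul]
  have hTf : (T.map f) * (T.map f) = 1 := by
    rw [← Matrix.map_mul, hT, Matrix.map_one f (map_zero f) (map_one f)]
  set u : (Matrix (Fin n₁ ⊕ (Fin n₂ ⊕ Fin nh₁)) (Fin n₁ ⊕ (Fin n₂ ⊕ Fin nh₁)) ℂ)ˣ :=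
    ⟨T.map f, T.map f, hTf, hTf⟩ with hudef
  have hspec1 : spectrum ℂ (Mcl.map (Complex.ofReal)) = spectrum ℂ (N.map f) := by
    rw [hmapT]
    exact spectrum.units_conjugate (u := u)
  have hspec2 : spectrum ℂ (N.map f) = spectrum ℂ ((reindex e e N).map f) := by
    have h : (reindex e e N).map f = (reindexAlgEquiv ℂ ℂ e) (N.map f) := rfl
    rw [h, AlgEquiv.spectrum_eq]
  rw [hspec1, hspec2, hre] at hμ
  have hblocks : ((fromBlocks Ab (fromRows (B₁ * Kh₁) 0) 0 K).map f) =
      fromBlocks (Ab.map f) ((fromRows (B₁ * Kh₁) 0).map f) 0 (K.map f) := by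
    rw [fromBlocks_map, Matrix.map_zero f (map_zero f)]
  rw [hblocks, mem_spectrum_iff_isRoot_charpoly'] at hμ
  rw [Matrix.charpoly_fromBlocks_zero₂₁] at hμ
  rcases (by simpa [Polynomial.IsRoot] using hμ :
      Polynomial.eval μ (Ab.map ⇑f).charpoly = 0 ∨ Polynomial.eval μ (K.map ⇑f).charpoly = 0)
    with h | h
  · exact hA μ ((mem_spectrum_iff_isRoot_charpoly' _ μ).mpr h)
  · exact hK μ ((mem_spectrum_iff_isRoot_charpoly' _ μ).mpr h)
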